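/- arXiv:1611.01355 — 2 statements merged into one kernel-verified Lean document; each statement's English description precedes it below -/
import Mathlib

section
/- Let X be a pre-Riesz space with vector lattice cover (Y, i), i.e. i: X → Y is a bipositive linear map onto an order dense subspace of the vector lattice Y. Then for all x, y ∈ X, x ⊥ y in X if and only if i(x) ⊥ i(y) in Y (i.e. |i(x)| ∧ |i(y)| = 0). -/
/-- Disjointness in a partially ordered vector space. -/
def PDisj {X : Type*} [AddCommGroup X] [PartialOrder X] (x y : X) : Prop :=
  upperBounds {x + y, -x - y} = upperBounds {x - y, -x + y}

section Aux

variable {Y : Type*} [Lattice Y] [AddCommGroup Y]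
  [CovariantClass Y Y (· + ·) (· ≤ ·)]

lemma myabs_eq (a : Y) : |a| = a ⊔ -a := rfl

lemma mem_ub_pair {α : Type*} [Preorder α] {p q u : α} :
    u ∈ upperBounds ({p, q} : Set α) ↔ p ≤ u ∧ q ≤ u := by
  simp [upperBounds]

/-- `|a| + |b| = |a + b| ⊔ |a - b|` in a lattice-ordered abelian group. -/
lemma abs_add_abs_eq_sup (a b : Y) : |a| + |b| = (|a + b|) ⊔ (|a - b|) := by
  have h1 : |a| + |b| = ((a + b) ⊔ (-a + b)) ⊔ ((a + -b) ⊔ (-a + -b)) := by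
    rw [myabs_eq a, myabs_eq b, add_sup b (-b) (a ⊔ -a), sup_add a (-a) b,
      sup_add a (-a) (-b)]
  have h2 : (|a + b|) ⊔ (|a - b|) = ((a + b) ⊔ (-a + -b)) ⊔ ((a + -b) ⊔ (-a + b)) := by
    rw [myabs_eq (a + b), myabs_eq (a - b)]
    congr 1
    · congr 1; abel
    · congr 1
      · abel
      · abel
  rw [h1, h2, sup_sup_sup_comm (a + b) (-a + b) (a + -b) (-a + -b),
    sup_sup_sup_comm (a + b) (-a + -b) (a + -b) (-a + b)]
  congr 1
  exact sup_comm _ _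

section Real

variable [Module ℝ Y] (hsmul : ∀ (c : ℝ) (v : Y), 0 ≤ c → 0 ≤ v → 0 ≤ c • v)

include hsmul

lemma smul_mono' {c : ℝ} (hc : 0 ≤ c) {u v : Y} (h : u ≤ v) : c • u ≤ c • v := by
  have := hsmul c (v - u) hc (sub_nonneg.2 h)
  rw [smul_sub] at this
  exact sub_nonneg.1 this

lemma two_smul_sup (p q : Y) : (2 : ℝ) • (p ⊔ q) = ((2 : ℝ) • p) ⊔ ((2 : ℝ) • q) := by
  apply le_antisymm
  · have hp : p ≤ (2⁻¹ : ℝ) • (((2 : ℝ) • p) ⊔ ((2 : ℝ) • q)) := by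
      have : (2⁻¹ : ℝ) • ((2 : ℝ) • p) ≤ (2⁻¹ : ℝ) • (((2 : ℝ) • p) ⊔ ((2 : ℝ) • q)) :=
        smul_mono' hsmul (by norm_num) le_sup_left
      rwa [smul_smul, show (2⁻¹ : ℝ) * 2 = 1 by norm_num, one_smul] at this
    have hq : q ≤ (2⁻¹ : ℝ) • (((2 : ℝ) • p) ⊔ ((2 : ℝ) • q)) := by
      have : (2⁻¹ : ℝ) • ((2 : ℝ) • q) ≤ (2⁻¹ : ℝ) • (((2 : ℝ) • p) ⊔ ((2 : ℝ) • q)) :=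
        smul_mono' hsmul (by norm_num) le_sup_right
      rwa [smul_smul, show (2⁻¹ : ℝ) * 2 = 1 by norm_num, one_smul] at this
    have := smul_mono' hsmul (show (0:ℝ) ≤ 2 by norm_num) (sup_le hp hq)
    rwa [smul_smul, show (2 : ℝ) * 2⁻¹ = 1 by norm_num, one_smul] at this
  · exact sup_le (smul_mono' hsmul (by norm_num) le_sup_left)
      (smul_mono' hsmul (by norm_num) le_sup_right)

lemma two_smul_abs (a : Y) : |(2 : ℝ) • a| = (2 : ℝ) • |a| := by
  rw [myabs_eq ((2:ℝ) • a), myabs_eq a, two_smul_sup hsmul, smul_neg]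

/-- `2 • (|a| ⊓ |b|) = ||a + b| - |a - b||`. -/
lemma two_smul_abs_inf_abs (a b : Y) :
    (2 : ℝ) • ((|a|) ⊓ (|b|)) = |(|a + b|) - (|a - b|)| := by
  set s := (|a + b|) ⊔ (|a - b|) with hs
  set t := (|a + b|) ⊓ (|a - b|) with ht
  set u := (|a|) ⊔ (|b|) with hu
  set m := (|a|) ⊓ (|b|) with hm
  have h1 : |a| + |b| = s := abs_add_abs_eq_sup a b
  have hkey : |a + b| + |a - b| = (2 : ℝ) • u := by
    have h := abs_add_abs_eq_sup (a + b) (a - b)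
    have e1 : a + b + (a - b) = (2 : ℝ) • a := by rw [two_smul]; abel
    have e2 : a + b - (a - b) = (2 : ℝ) • b := by rw [two_smul]; abel
    rw [e1, e2, two_smul_abs hsmul, two_smul_abs hsmul, ← two_smul_sup hsmul] at h
    exact h
  have e1 : m + u = s := by rw [hm, hu, inf_add_sup, h1]
  have e2 : t + s = (2 : ℝ) • u := by rw [ht, hs, inf_add_sup, hkey]
  have habs : s - t = |(|a + b|) - (|a - b|)| := by
    rw [hs, ht, sup_sub_inf_eq_abs_sub, abs_sub_comm]
  rw [← habs]
  calc (2 : ℝ) • m = (2 : ℝ) • (s - u) := by rw [eq_sub_of_add_eq e1]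
    _ = (2 : ℝ) • s - (2 : ℝ) • u := smul_sub _ _ _
    _ = (s + s) - (t + s) := by rw [two_smul, ← e2]
    _ = s - t := by abel

end Real

end Aux

/-- If `(Y, i)` is a vector lattice cover of a pre-Riesz space `X`, then
`x ⊥ y` in `X` iff `|i x| ⊓ |i y| = 0` in `Y`. -/
theorem stmt4 {X Y : Type*}
    [AddCommGroup X] [PartialOrder X] [IsOrderedAddMonoid X] [Module ℝ X] [PosSMulStrictMono ℝ X] [PosSMulReflectLT ℝ X]
    [Lattice Y] [AddCommGroup Y] [CovariantClass Y Y (· + ·) (· ≤ ·)] [Module ℝ Y]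
    (hsmulY : ∀ (c : ℝ) (v : Y), 0 ≤ c → 0 ≤ v → 0 ≤ c • v)
    (hpr : ∀ x y z : X, upperBounds {x + y, x + z} ⊆ upperBounds {y, z} → 0 ≤ x)
    (i : X →ₗ[ℝ] Y) (hbi : ∀ x : X, 0 ≤ x ↔ 0 ≤ i x)
    (hdense : ∀ y : Y, IsGLB {d : Y | (∃ x : X, i x = d) ∧ y ≤ d} y)
    (x y : X) : PDisj x y ↔ |i x| ⊓ |i y| = 0 := by
  -- monotone iff for i
  have hle : ∀ a b : X, a ≤ b ↔ i a ≤ i b := by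
    intro a b
    rw [← sub_nonneg, hbi, map_sub, sub_nonneg]
  -- order density transfer of upper bound inclusions
  have hUB : ∀ a b c d : X,
      upperBounds ({a, b} : Set X) ⊆ upperBounds {c, d} →
      upperBounds ({i a, i b} : Set Y) ⊆ upperBounds {i c, i d} := by
    intro a b c d h v hv
    obtain ⟨hia, hib⟩ := mem_ub_pair.1 hv
    have hglb := hdense v
    have key : ∀ e : X, e ∈ ({c, d} : Set X) → i e ≤ v := by
      intro e he
      refine hglb.2 ?_
      rintro w ⟨⟨z, rfl⟩, hvz⟩
      have hz : z ∈ upperBounds ({a, b} : Set X) :=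
        mem_ub_pair.2 ⟨(hle a z).2 (hia.trans hvz), (hle b z).2 (hib.trans hvz)⟩
      exact (hle e z).1 ((mem_ub_pair.1 (h hz)).elim (fun h1 h2 => by
        rcases he with rfl | he
        · exact h1
        · rcases he with rfl
          exact h2))
    exact mem_ub_pair.2 ⟨key c (by simp), key d (by simp)⟩
  -- step 1: PDisj x y ↔ |i x + i y| = |i x - i y|
  have e1 : i (x + y) = i x + i y := map_add i x y
  have e2 : i (-x - y) = -(i x + i y) := by
    rw [show -x - y = -(x + y) by abel, map_neg, map_add]
  have e3 : i (x - y) = i x - i y := map_sub i x y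
  have e4 : i (-x + y) = -(i x - i y) := by
    rw [show -x + y = -(x - y) by abel, map_neg, map_sub]
  have step1 : PDisj x y ↔ |i x + i y| = |i x - i y| := by
    rw [myabs_eq (i x + i y), myabs_eq (i x - i y)]
    constructor
    · intro hP
      have h1 := hUB (x + y) (-x - y) (x - y) (-x + y) (le_of_eq hP)
      have h2 := hUB (x - y) (-x + y) (x + y) (-x - y) (ge_of_eq hP)
      rw [e1, e2, e3, e4] at h1 h2
      have hub1 : (i x + i y) ⊔ (-(i x + i y)) ∈
          upperBounds ({i x + i y, -(i x + i y)} : Set Y) :=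
        mem_ub_pair.2 ⟨le_sup_left, le_sup_right⟩
      have hub2 : (i x - i y) ⊔ (-(i x - i y)) ∈
          upperBounds ({i x - i y, -(i x - i y)} : Set Y) :=
        mem_ub_pair.2 ⟨le_sup_left, le_sup_right⟩
      have le1 : (i x - i y) ⊔ (-(i x - i y)) ≤ (i x + i y) ⊔ (-(i x + i y)) := by
        obtain ⟨p1, p2⟩ := mem_ub_pair.1 (h1 hub1)
        exact sup_le p1 p2
      have le2 : (i x + i y) ⊔ (-(i x + i y)) ≤ (i x - i y) ⊔ (-(i x - i y)) := by
        obtain ⟨p1, p2⟩ := mem_ub_pair.1 (h2 hub2)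
        exact sup_le p1 p2
      exact le_antisymm le2 le1
    · intro habs
      ext u
      rw [mem_ub_pair, mem_ub_pair, hle (x + y) u, hle (-x - y) u,
        hle (x - y) u, hle (-x + y) u, e1, e2, e3, e4]
      constructor
      · rintro ⟨hp, hq⟩
        have hsup : (i x + i y) ⊔ (-(i x + i y)) ≤ i u := sup_le hp hq
        rw [habs] at hsup
        exact ⟨le_sup_left.trans hsup, le_sup_right.trans hsup⟩
      · rintro ⟨hp, hq⟩
        have hsup : (i x - i y) ⊔ (-(i x - i y)) ≤ i u := sup_le hp hq
        rw [← habs] at hsup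
        exact ⟨le_sup_left.trans hsup, le_sup_right.trans hsup⟩
  rw [step1]
  have hid := two_smul_abs_inf_abs hsmulY (i x) (i y)
  constructor
  · intro h
    rw [h, sub_self, abs_zero] at hid
    have := congrArg (fun v : Y => (2⁻¹ : ℝ) • v) hid
    simpa [smul_smul] using this
  · intro h
    rw [h, smul_zero] at hid
    have h2 : |i x + i y| - |i x - i y| = 0 := by
      have hz := hid.symm
      have hle1 : (|i x + i y|) - |i x - i y| ≤ 0 := by
        calc (|i x + i y|) - |i x - i y| ≤ abs ((|i x + i y|) - |i x - i y|) := le_abs_self _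
          _ = 0 := hz
      have hle2 : (0:Y) ≤ (|i x + i y|) - |i x - i y| := by
        have hz' := hz
        rw [myabs_eq ((|i x + i y|) - |i x - i y|)] at hz'
        have hneg : -((|i x + i y|) - |i x - i y|) ≤ 0 := le_sup_right.trans hz'.le
        exact neg_nonpos.1 hneg
      exact le_antisymm hle1 hle2
    exact sub_eq_zero.1 h2
end

section
/- Let X be a pre-Riesz space and T: D(T) ⊆ X → X a bijective linear operator such that the inclusion map D(T) → X is a Riesz* homomorphism. If T and T⁻¹ are both positive and T is local, then T⁻¹ is local. -/
private lemma mem_ub_pair_s13 {X : Type*} [Preorder X] {a b c : X} :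
    c ∈ upperBounds ({a, b} : Set X) ↔ a ≤ c ∧ b ≤ c := by
  constructor
  · intro h
    exact ⟨h (Set.mem_insert _ _), h (Set.mem_insert_of_mem _ rfl)⟩
  · rintro ⟨h1, h2⟩ z hz
    simp only [Set.mem_insert_iff, Set.mem_singleton_iff] at hz
    rcases hz with rfl | rfl
    · exact h1
    · exact h2

private lemma pdisj_symm {X : Type*} [AddCommGroup X] [PartialOrder X] {a b : X}
    (h : PDisj a b) : PDisj b a := by
  unfold PDisj at h ⊢
  have e1 : b + a = a + b := by abel
  have e2 : -b - a = -a - b := by abel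
  have e3 : b - a = -a + b := by abel
  have e4 : -b + a = a - b := by abel
  rw [e1, e2, e3, e4, Set.pair_comm (-a + b) (a - b)]
  exact h

private lemma pdisj_neg_right {X : Type*} [AddCommGroup X] [PartialOrder X] {a b : X}
    (h : PDisj a b) : PDisj a (-b) := by
  unfold PDisj at h ⊢
  have e1 : a + -b = a - b := by abel
  have e2 : -a - -b = -a + b := by abel
  have e3 : a - -b = a + b := by abel
  have e4 : -a + -b = -a - b := by abel
  rw [e1, e2, e3, e4]
  exact h.symm

private lemma pdisj_neg_left {X : Type*} [AddCommGroup X] [PartialOrder X] {a b : X}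
    (h : PDisj a b) : PDisj (-a) b :=
  pdisj_symm (pdisj_neg_right (pdisj_symm h))

/-- Let `X` be a pre-Riesz space and `T : D(T) ⊆ X → X` a bijective linear operator
(with inverse `S`) such that the inclusion map `D(T) → X` is a Riesz* homomorphism.
If `T` and `T⁻¹` are positive and `T` is local, then `T⁻¹` is local. -/
theorem stmt13 {X : Type*} [AddCommGroup X] [PartialOrder X] [IsOrderedAddMonoid X] [Module ℝ X] [PosSMulStrictMono ℝ X]
    (hpr : ∀ x y z : X, upperBounds {x + y, x + z} ⊆ upperBounds {y, z} → 0 ≤ x)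
    (D : Submodule ℝ X) (T S : X → X)
    (hTadd : ∀ x ∈ D, ∀ y ∈ D, T (x + y) = T x + T y)
    (hTsmul : ∀ (c : ℝ), ∀ x ∈ D, T (c • x) = c • T x)
    -- `S` is the (two-sided) inverse of `T : D → X`:
    (hS : ∀ y : X, S y ∈ D ∧ T (S y) = y)
    (hST : ∀ x ∈ D, S (T x) = x)
    -- the inclusion map `D → X` is a Riesz* homomorphism:
    (hincl : ∀ M : Set X, M ⊆ (D : Set X) → M.Nonempty → M.Finite →
      {z : X | z ∈ D ∧ ∀ u ∈ D, (∀ m ∈ M, m ≤ u) → z ≤ u} ⊆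
        lowerBounds (upperBounds M))
    -- `T` and `T⁻¹` are positive:
    (hTpos : ∀ x ∈ D, 0 ≤ x → 0 ≤ T x)
    (hSpos : ∀ y : X, 0 ≤ y → 0 ≤ S y)
    -- `T` is local:
    (hTloc : ∀ x ∈ D, ∀ y : X, PDisj x y → PDisj (T x) y) :
    ∀ (x y : X), PDisj x y → PDisj (S x) y := by
  -- `T 0 = 0` and `S 0 = 0`
  have hT0 : T 0 = 0 := by
    have h := hTadd 0 D.zero_mem 0 D.zero_mem
    rw [add_zero] at h
    exact (left_eq_add.mp h)
  have hS0 : S 0 = 0 := by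
    have h := hST 0 D.zero_mem
    rwa [hT0] at h
  -- `S` is additive
  have hSadd : ∀ a b : X, S (a + b) = S a + S b := by
    intro a b
    have hmem : S a + S b ∈ D := D.add_mem (hS a).1 (hS b).1
    have h1 : T (S a + S b) = a + b := by
      rw [hTadd _ (hS a).1 _ (hS b).1, (hS a).2, (hS b).2]
    have h2 := hST _ hmem
    rw [h1] at h2
    exact h2
  have hSneg : ∀ a : X, S (-a) = -S a := by
    intro a
    have h := hSadd a (-a)
    rw [add_neg_cancel, hS0] at h
    have h3 : S a + S (-a) = 0 := h.symm
    exact eq_neg_of_add_eq_zero_right h3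
  have hSsub : ∀ a b : X, S (a - b) = S a - S b := by
    intro a b
    rw [sub_eq_add_neg, hSadd, hSneg, ← sub_eq_add_neg]
  -- monotonicity of `S` and of `T` on `D`
  have hSmono : ∀ a b : X, a ≤ b → S a ≤ S b := by
    intro a b hab
    have h := hSpos (b - a) (sub_nonneg.mpr hab)
    rw [hSsub] at h
    exact sub_nonneg.mp h
  have hTmono : ∀ a, a ∈ D → ∀ b, b ∈ D → a ≤ b → T a ≤ T b := by
    intro a ha b hb hab
    have hd : b - a ∈ D := D.sub_mem hb ha
    have hpos := hTpos (b - a) hd (sub_nonneg.mpr hab)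
    have heq : T b = T a + T (b - a) := by
      rw [← hTadd a ha (b - a) hd]
      congr 1
      abel
    rw [heq]
    exact le_add_of_nonneg_right hpos
  -- Key lemma (uses `hincl`): if `p ⊥ t` then every upper bound of
  -- `{S (p+t), -S (p+t)}` dominates `S (p - t)`.
  have key : ∀ p t : X, PDisj p t → ∀ d : X, S (p + t) ≤ d → -S (p + t) ≤ d → S (p - t) ≤ d := by
    intro p t hpt d h1 h2
    have hpt' : upperBounds ({p + t, -p - t} : Set X) =
        upperBounds ({p - t, -p + t} : Set X) := hpt
    set M : Set X := {S (p + t), -S (p + t)} with hM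
    have hsub : M ⊆ (D : Set X) := by
      intro m hm
      simp only [hM, Set.mem_insert_iff, Set.mem_singleton_iff] at hm
      rcases hm with rfl | rfl
      · exact (hS _).1
      · exact D.neg_mem (hS _).1
    have hne : M.Nonempty := ⟨_, Set.mem_insert _ _⟩
    have hfin : M.Finite := Set.toFinite _
    have hmem : S (p - t) ∈ {z : X | z ∈ D ∧ ∀ u ∈ D, (∀ m ∈ M, m ≤ u) → z ≤ u} := by
      refine ⟨(hS _).1, ?_⟩
      intro e heD hub
      have hub1 : S (p + t) ≤ e := hub _ (Set.mem_insert _ _)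
      have hub2 : -S (p + t) ≤ e := hub _ (Set.mem_insert_of_mem _ rfl)
      have k1 : p + t ≤ T e := by
        have h := hTmono _ (hS (p + t)).1 _ heD hub1
        rwa [(hS _).2] at h
      have k2 : -p - t ≤ T e := by
        have h2' : S (-(p + t)) ≤ e := by rw [hSneg]; exact hub2
        have h := hTmono _ (hS (-(p + t))).1 _ heD h2'
        rw [(hS _).2] at h
        have e2 : -(p + t) = -p - t := by abel
        rwa [e2] at h
      have hTe : T e ∈ upperBounds ({p + t, -p - t} : Set X) := mem_ub_pair_s13.mpr ⟨k1, k2⟩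
      rw [hpt'] at hTe
      have k3 : p - t ≤ T e := (mem_ub_pair_s13.mp hTe).1
      have h := hSmono _ _ k3
      rwa [hST e heD] at h
    have hlow := hincl M hsub hne hfin hmem
    exact hlow (mem_ub_pair_s13.mpr ⟨h1, h2⟩)
  -- `S` is a d-homomorphism
  have SD : ∀ p t : X, PDisj p t → PDisj (S p) (S t) := by
    intro p t h
    unfold PDisj
    have eadd : S (p + t) = S p + S t := hSadd p t
    have esub : S (p - t) = S p - S t := hSsub p t
    apply Set.Subset.antisymm
    · intro w hw
      rcases mem_ub_pair_s13.mp hw with ⟨w1, w2⟩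
      have w1' : S (p + t) ≤ w := by rw [eadd]; exact w1
      have w2' : -S (p + t) ≤ w := by
        have e : -S (p + t) = -S p - S t := by rw [eadd]; abel
        rw [e]; exact w2
      refine mem_ub_pair_s13.mpr ⟨?_, ?_⟩
      · have hk := key p t h w w1' w2'
        rwa [esub] at hk
      · have hsym := pdisj_symm h
        have w1'' : S (t + p) ≤ w := by rwa [add_comm t p]
        have w2'' : -S (t + p) ≤ w := by rwa [add_comm t p]
        have hk := key t p hsym w w1'' w2''
        have e : S (t - p) = -S p + S t := by rw [hSsub]; abel
        rwa [e] at hk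
    · intro w hw
      rcases mem_ub_pair_s13.mp hw with ⟨w1, w2⟩
      -- w1 : S p - S t ≤ w, w2 : -S p + S t ≤ w
      refine mem_ub_pair_s13.mpr ⟨?_, ?_⟩
      · -- S p + S t ≤ w via `key p (-t)`
        have q1 : S (p + -t) ≤ w := by
          have e : S (p + -t) = S p - S t := by rw [hSadd, hSneg, ← sub_eq_add_neg]
          rw [e]; exact w1
        have q2 : -S (p + -t) ≤ w := by
          have e : -S (p + -t) = -S p + S t := by rw [hSadd, hSneg]; abel
          rw [e]; exact w2
        have hk := key p (-t) (pdisj_neg_right h) w q1 q2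
        have e : S (p - -t) = S p + S t := by rw [sub_neg_eq_add, hSadd]
        rwa [e] at hk
      · -- -S p - S t ≤ w via `key (-p) t`
        have q1 : S (-p + t) ≤ w := by
          have e : S (-p + t) = -S p + S t := by rw [hSadd, hSneg]
          rw [e]; exact w2
        have q2 : -S (-p + t) ≤ w := by
          have e : -S (-p + t) = S p - S t := by rw [hSadd, hSneg]; abel
          rw [e]; exact w1
        have hk := key (-p) t (pdisj_neg_left h) w q1 q2
        have e : S (-p - t) = -S p - S t := by rw [hSsub, hSneg]
        rwa [e] at hk
  -- conclusion
  intro x y hxy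
  have h1 := SD x y hxy
  have h2 := pdisj_symm h1
  have h3 := hTloc (S y) (hS y).1 (S x) h2
  rw [(hS y).2] at h3
  exact pdisj_symm h3
end
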